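/- Let d ≥ 2, ε > 0, and set q = max{2 + ε, d}. There is a constant C depending only on d and ε such that for every c ∈ L^q(ℝ^d), every pair of continuously differentiable functions u, v : ℝ^d → ℝ with u, v, |∇u|, |∇v| ∈ L²(ℝ^d), and every h ∈ ℝ^d, one has | ∫_{ℝ^d} c(x) · v(x) · ( u(x) − u(x + h) ) dx | ≤ C · |h| · ‖c‖_{L^q(ℝ^d)} · ( ‖v‖_{L²(ℝ^d)} + ‖ |∇v| ‖_{L²(ℝ^d)} ) · ( ‖u‖_{L²(ℝ^d)} + ‖ |∇u| ‖_{L²(ℝ^d)} ). -/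

import Mathlib

open MeasureTheory
open scoped ENNReal

open Filter Set
open scoped NNReal

/-- Lyapunov / interpolation inequality for Lp seminorms. -/
theorem my_interp {α : Type*} [MeasurableSpace α] (μ : Measure α) {f : α → ℝ}
    (hf : AEMeasurable f μ) {p0 p1 r θ : ℝ} (hp0 : 0 < p0) (hp1 : 0 < p1)
    (hθ : 0 < θ) (hθ1 : θ < 1) (hr : 0 < r)
    (hcond : 1/r = θ/p0 + (1-θ)/p1) :
    eLpNorm f (ENNReal.ofReal r) μ ≤
      eLpNorm f (ENNReal.ofReal p0) μ ^ θ * eLpNorm f (ENNReal.ofReal p1) μ ^ (1-θ) := by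
  have hθ1' : 0 < 1 - θ := by linarith
  set φ : α → ℝ≥0∞ := fun x => (‖f x‖₊ : ℝ≥0∞) with hφ
  have hφm : AEMeasurable φ μ := hf.enorm
  -- conjugate exponents
  have hrp0 : θ * r < p0 := by
    have h1 : θ/p0 < 1/r := by
      rw [hcond]; nlinarith [div_pos hθ1' hp1]
    rw [div_lt_div_iff₀ hp0 hr] at h1; linarith
  have hrp1 : (1-θ) * r < p1 := by
    have h1 : (1-θ)/p1 < 1/r := by
      rw [hcond]; nlinarith [div_pos hθ hp0]
    rw [div_lt_div_iff₀ hp1 hr] at h1; linarith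
  set a : ℝ := p0 / (θ * r) with ha
  set b : ℝ := p1 / ((1-θ) * r) with hb
  have hab : a.HolderConjugate b := by
    rw [Real.holderConjugate_iff]
    constructor
    · rw [ha, lt_div_iff₀ (by positivity)]; linarith
    · rw [ha, hb]
      field_simp
      field_simp at hcond
      nlinarith [hcond]
  have key := ENNReal.lintegral_mul_le_Lp_mul_Lq μ hab
    (f := fun x => φ x ^ (θ * r)) (g := fun x => φ x ^ ((1-θ) * r))
    (hφm.pow_const _) (hφm.pow_const _)
  have hmul : ∀ x, ((fun x => φ x ^ (θ * r)) * (fun x => φ x ^ ((1-θ) * r))) x = φ x ^ r := by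
    intro x
    simp only [Pi.mul_apply]
    rw [← ENNReal.rpow_add_of_nonneg _ _ (by positivity) (by positivity)]
    ring_nf
  simp only [hmul] at key
  have hpow1 : ∀ x, (φ x ^ (θ * r)) ^ a = φ x ^ p0 := by
    intro x; rw [← ENNReal.rpow_mul, ha]; congr 1; field_simp
  have hpow2 : ∀ x, (φ x ^ ((1-θ) * r)) ^ b = φ x ^ p1 := by
    intro x; rw [← ENNReal.rpow_mul, hb]; congr 1; field_simp
  simp only [hpow1, hpow2] at key
  -- rewrite eLpNorms
  have e0 : eLpNorm f (ENNReal.ofReal r) μ = (∫⁻ x, φ x ^ r ∂μ) ^ (1/r) := by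
    rw [eLpNorm_eq_lintegral_rpow_enorm_toReal (by simp [hr]) (by simp),
      ENNReal.toReal_ofReal hr.le]
    rfl
  have e1 : eLpNorm f (ENNReal.ofReal p0) μ = (∫⁻ x, φ x ^ p0 ∂μ) ^ (1/p0) := by
    rw [eLpNorm_eq_lintegral_rpow_enorm_toReal (by simp [hp0]) (by simp),
      ENNReal.toReal_ofReal hp0.le]
    rfl
  have e2 : eLpNorm f (ENNReal.ofReal p1) μ = (∫⁻ x, φ x ^ p1 ∂μ) ^ (1/p1) := by
    rw [eLpNorm_eq_lintegral_rpow_enorm_toReal (by simp [hp1]) (by simp),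
      ENNReal.toReal_ofReal hp1.le]
    rfl
  rw [e0, e1, e2]
  calc (∫⁻ x, φ x ^ r ∂μ) ^ (1/r)
      ≤ ((∫⁻ x, φ x ^ p0 ∂μ) ^ (1/a) * (∫⁻ x, φ x ^ p1 ∂μ) ^ (1/b)) ^ (1/r) := by
        exact ENNReal.rpow_le_rpow key (by positivity)
    _ = ((∫⁻ x, φ x ^ p0 ∂μ) ^ (1/p0)) ^ θ * ((∫⁻ x, φ x ^ p1 ∂μ) ^ (1/p1)) ^ (1-θ) := by
        rw [ENNReal.mul_rpow_of_nonneg _ _ (by positivity), ← ENNReal.rpow_mul,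
          ← ENNReal.rpow_mul, ← ENNReal.rpow_mul, ← ENNReal.rpow_mul]
        congr 1
        · congr 1; rw [ha]; field_simp
        · congr 1; rw [hb]; field_simp

theorem my_translation {d : ℕ} (u : EuclideanSpace ℝ (Fin d) → ℝ)
    (hu : ContDiff ℝ 1 u) (h : EuclideanSpace ℝ (Fin d)) :
    eLpNorm (fun x => u x - u (x + h)) 2 volume ≤
      ENNReal.ofReal ‖h‖ * eLpNorm (fun x => ‖fderiv ℝ u x‖) 2 volume := by
  have hgc : Continuous fun x : EuclideanSpace ℝ (Fin d) => ‖fderiv ℝ u x‖ :=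
    (hu.continuous_fderiv (by norm_num)).norm
  set g : EuclideanSpace ℝ (Fin d) → ℝ := fun x => ‖fderiv ℝ u x‖ with hg
  have hgnn : ∀ x, 0 ≤ g x := fun x => norm_nonneg _
  set ge : EuclideanSpace ℝ (Fin d) → ℝ≥0∞ := fun x => ENNReal.ofReal (g x) with hge
  have hgec : Continuous ge := ENNReal.continuous_ofReal.comp hgc
  have hpath : ∀ (x h' : EuclideanSpace ℝ (Fin d)), Continuous fun t : ℝ => x + t • h' :=
    fun x h' => continuous_const.add (continuous_id.smul continuous_const)
  have hpath2 : Continuous fun p : (EuclideanSpace ℝ (Fin d)) × ℝ => p.1 + p.2 • h :=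
    continuous_fst.add (continuous_snd.smul continuous_const)
  -- pointwise estimate
  have ptwise : ∀ x, |u x - u (x + h)| ≤ ‖h‖ * ∫ t in (0:ℝ)..1, g (x + t • h) := by
    intro x
    have hderiv : ∀ t : ℝ, HasDerivAt (fun s : ℝ => u (x + s • h))
        ((fderiv ℝ u (x + t • h)) h) t := by
      intro t
      have h1 : HasDerivAt (fun s : ℝ => x + s • h) h t := by
        simpa using ((hasDerivAt_id t).smul_const h).const_add x
      have := ((hu.differentiable (by norm_num)) _).hasFDerivAt.comp_hasDerivAt t h1
      exact this
    have hcont : Continuous fun t : ℝ => (fderiv ℝ u (x + t • h)) h := by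
      have h2 : Continuous fun t : ℝ => fderiv ℝ u (x + t • h) :=
        (hu.continuous_fderiv (by norm_num)).comp (hpath x h)
      exact h2.clm_apply continuous_const
    have key : ∫ t in (0:ℝ)..1, (fderiv ℝ u (x + t • h)) h =
        u (x + (1:ℝ) • h) - u (x + (0:ℝ) • h) :=
      intervalIntegral.integral_eq_sub_of_hasDerivAt (fun t _ => hderiv t)
        (hcont.intervalIntegrable 0 1)
    rw [one_smul, zero_smul, add_zero] at key
    rw [abs_sub_comm, ← key]
    calc |∫ t in (0:ℝ)..1, (fderiv ℝ u (x + t • h)) h|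
        ≤ ∫ t in (0:ℝ)..1, |(fderiv ℝ u (x + t • h)) h| :=
          intervalIntegral.abs_integral_le_integral_abs zero_le_one
      _ ≤ ∫ t in (0:ℝ)..1, ‖h‖ * g (x + t • h) := by
          apply intervalIntegral.integral_mono_on zero_le_one
            (hcont.abs.intervalIntegrable 0 1)
            ((continuous_const.mul (hgc.comp (hpath x h))).intervalIntegrable 0 1)
          intro t _
          rw [mul_comm]
          exact (fderiv ℝ u (x + t • h)).le_opNorm h
      _ = ‖h‖ * ∫ t in (0:ℝ)..1, g (x + t • h) :=
          intervalIntegral.integral_const_mul _ _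
  -- nnnorm bound in ℝ≥0∞
  have bound1 : ∀ x, ((‖u x - u (x + h)‖₊ : ℝ≥0∞)) ≤
      ENNReal.ofReal ‖h‖ * ∫⁻ t in Ioc (0:ℝ) 1, ge (x + t • h) := by
    intro x
    have hInt : IntegrableOn (fun t : ℝ => g (x + t • h)) (Ioc 0 1) volume :=
      (((hgc.comp (hpath x h)).continuousOn (s := Icc 0 1)).integrableOn_compact
        isCompact_Icc).mono_set Ioc_subset_Icc_self
    have e1 : ENNReal.ofReal (∫ t in (0:ℝ)..1, g (x + t • h)) =
        ∫⁻ t in Ioc (0:ℝ) 1, ge (x + t • h) := by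
      rw [intervalIntegral.integral_of_le zero_le_one,
        ofReal_integral_eq_lintegral_ofReal hInt (Eventually.of_forall fun t => hgnn _)]
    calc ((‖u x - u (x + h)‖₊ : ℝ≥0∞))
        = ENNReal.ofReal |u x - u (x + h)| := by
          rw [← Real.norm_eq_abs, ← enorm_eq_nnnorm, ← ofReal_norm]
      _ ≤ ENNReal.ofReal (‖h‖ * ∫ t in (0:ℝ)..1, g (x + t • h)) :=
          ENNReal.ofReal_le_ofReal (ptwise x)
      _ = ENNReal.ofReal ‖h‖ * ∫⁻ t in Ioc (0:ℝ) 1, ge (x + t • h) := by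
          rw [ENNReal.ofReal_mul (norm_nonneg _), e1]
  -- Jensen
  have bound2 : ∀ x, (∫⁻ t in Ioc (0:ℝ) 1, ge (x + t • h)) ^ (2:ℝ) ≤
      ∫⁻ t in Ioc (0:ℝ) 1, ge (x + t • h) ^ (2:ℝ) := by
    intro x
    have hconj : (2:ℝ).HolderConjugate 2 := by constructor <;> norm_num
    have hmeas : AEMeasurable (fun t : ℝ => ge (x + t • h))
        (volume.restrict (Ioc (0:ℝ) 1)) :=
      (hgec.comp (hpath x h)).measurable.aemeasurable
    have key := ENNReal.lintegral_mul_le_Lp_mul_Lq (volume.restrict (Ioc (0:ℝ) 1)) hconj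
      hmeas aemeasurable_const (g := fun _ => (1:ℝ≥0∞))
    simp only [mul_one, Pi.mul_apply, ENNReal.one_rpow] at key
    rw [setLIntegral_const, Real.volume_Ioc] at key
    simp only [sub_zero, ENNReal.ofReal_one, one_mul, mul_one, ENNReal.one_rpow] at key
    calc (∫⁻ t in Ioc (0:ℝ) 1, ge (x + t • h)) ^ (2:ℝ)
        ≤ ((∫⁻ t in Ioc (0:ℝ) 1, ge (x + t • h) ^ (2:ℝ)) ^ (1/(2:ℝ))) ^ (2:ℝ) :=
          ENNReal.rpow_le_rpow key (by norm_num)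
      _ = ∫⁻ t in Ioc (0:ℝ) 1, ge (x + t • h) ^ (2:ℝ) := by
          rw [← ENNReal.rpow_mul]; norm_num
  -- main chain
  set G : ℝ≥0∞ := ∫⁻ x, ge x ^ (2:ℝ) with hG
  have swap : ∫⁻ x, ∫⁻ t in Ioc (0:ℝ) 1, ge (x + t • h) ^ (2:ℝ) ∂volume = G := by
    have hum : AEMeasurable
        (Function.uncurry fun (x : EuclideanSpace ℝ (Fin d)) (t : ℝ) => ge (x + t • h) ^ (2:ℝ))
        (volume.prod (volume.restrict (Ioc (0:ℝ) 1))) := by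
      apply Measurable.aemeasurable
      apply Measurable.pow
      · exact (hgec.comp hpath2).measurable
      · exact measurable_const
    rw [lintegral_lintegral_swap hum]
    have inner : ∀ t : ℝ, ∫⁻ x, ge (x + t • h) ^ (2:ℝ) ∂volume = G := fun t =>
      lintegral_add_right_eq_self (fun y => ge y ^ (2:ℝ)) (t • h)
    rw [lintegral_congr inner, setLIntegral_const, Real.volume_Ioc]
    simp
  have main : ∫⁻ x, ((‖u x - u (x + h)‖₊ : ℝ≥0∞)) ^ (2:ℝ) ∂volume ≤
      (ENNReal.ofReal ‖h‖) ^ (2:ℝ) * G := by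
    calc ∫⁻ x, ((‖u x - u (x + h)‖₊ : ℝ≥0∞)) ^ (2:ℝ) ∂volume
        ≤ ∫⁻ x, (ENNReal.ofReal ‖h‖) ^ (2:ℝ) *
            ((∫⁻ t in Ioc (0:ℝ) 1, ge (x + t • h)) ^ (2:ℝ)) ∂volume := by
          apply lintegral_mono
          intro x
          dsimp only
          rw [← ENNReal.mul_rpow_of_nonneg _ _ (by norm_num : (0:ℝ) ≤ 2)]
          exact ENNReal.rpow_le_rpow (bound1 x) (by norm_num)
      _ ≤ ∫⁻ x, (ENNReal.ofReal ‖h‖) ^ (2:ℝ) *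
            (∫⁻ t in Ioc (0:ℝ) 1, ge (x + t • h) ^ (2:ℝ)) ∂volume := by
          apply lintegral_mono
          intro x
          dsimp only
          exact mul_le_mul_right (bound2 x) _
      _ = (ENNReal.ofReal ‖h‖) ^ (2:ℝ) * G := by
          rw [lintegral_const_mul' _ _ (by
            exact ENNReal.rpow_ne_top_of_nonneg (by norm_num) ENNReal.ofReal_ne_top), swap]
  -- conclude
  have t2 : (2:ℝ≥0∞).toReal = (2:ℝ) := by norm_num
  have hge' : ∀ x, ((‖g x‖₊ : ℝ≥0∞)) = ge x := fun x => by
    rw [hge, hg, ← enorm_eq_nnnorm, ← ofReal_norm, norm_norm]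
  have e2 : eLpNorm (fun x => u x - u (x + h)) 2 volume =
      (∫⁻ x, ((‖u x - u (x + h)‖₊ : ℝ≥0∞)) ^ (2:ℝ) ∂volume) ^ (1/(2:ℝ)) := by
    rw [eLpNorm_eq_lintegral_rpow_enorm_toReal (by norm_num) (by norm_num), t2]
    rfl
  have e3 : eLpNorm (fun x => ‖fderiv ℝ u x‖) 2 volume = G ^ (1/(2:ℝ)) := by
    rw [eLpNorm_eq_lintegral_rpow_enorm_toReal (by norm_num) (by norm_num), t2]
    congr 1
    apply lintegral_congr
    intro x
    rw [enorm_eq_nnnorm, hge' x]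
  rw [e2, e3]
  calc (∫⁻ x, ((‖u x - u (x + h)‖₊ : ℝ≥0∞)) ^ (2:ℝ) ∂volume) ^ (1/(2:ℝ))
      ≤ ((ENNReal.ofReal ‖h‖) ^ (2:ℝ) * G) ^ (1/(2:ℝ)) :=
        ENNReal.rpow_le_rpow main (by norm_num)
    _ = ENNReal.ofReal ‖h‖ * G ^ (1/(2:ℝ)) := by
        rw [ENNReal.mul_rpow_of_nonneg _ _ (by norm_num : (0:ℝ) ≤ 1/2), ← ENNReal.rpow_mul]
        norm_num

theorem my_cutoff (d : ℕ) : ∃ K : ℝ, 0 < K ∧ ∀ n : ℕ, 0 < n →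
    ∃ χ : EuclideanSpace ℝ (Fin d) → ℝ, ContDiff ℝ 1 χ ∧ HasCompactSupport χ ∧
      (∀ x, ‖x‖ ≤ (n:ℝ) → χ x = 1) ∧ (∀ x, 0 ≤ χ x) ∧ (∀ x, χ x ≤ 1) ∧
      (∀ x, ‖fderiv ℝ χ x‖ ≤ K / n) := by
  set ψ := Real.smoothTransition with hψ
  have hψd : Differentiable ℝ ψ :=
    (Real.smoothTransition.contDiff (n := 1)).differentiable (by norm_num)
  have hdc : Continuous (deriv ψ) :=
    (Real.smoothTransition.contDiff (n := 2)).continuous_deriv one_le_two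
  obtain ⟨K₀, hK₀⟩ := isCompact_Icc.exists_bound_of_continuousOn
    (s := Icc (-1:ℝ) 2) (f := deriv ψ) hdc.continuousOn
  have hderiv0 : ∀ t : ℝ, t < 0 → deriv ψ t = 0 := by
    intro t ht
    have hev : ψ =ᶠ[nhds t] fun _ => (0:ℝ) :=
      eventually_of_mem (Iio_mem_nhds ht) fun y hy =>
        Real.smoothTransition.zero_of_nonpos (le_of_lt hy)
    rw [hev.deriv_eq, deriv_const]
  set K : ℝ := 4 * max K₀ 1 with hK
  have hKpos : 0 < K := by positivity
  refine ⟨K, hKpos, fun n hn => ?_⟩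
  have hn' : (0:ℝ) < n := by exact_mod_cast hn
  set s : EuclideanSpace ℝ (Fin d) → ℝ := fun x => 2 - ‖x‖^2 * (((n:ℝ)^2)⁻¹) with hs
  refine ⟨fun x => ψ (s x), ?_, ?_, ?_, ?_, ?_, ?_⟩
  · exact (Real.smoothTransition.contDiff (n := 1)).comp
      (contDiff_const.sub ((contDiff_norm_sq (𝕜 := ℝ)).mul contDiff_const))
  · apply HasCompactSupport.intro (isCompact_closedBall (0:EuclideanSpace ℝ (Fin d)) (2*n))
    intro x hx
    simp only [Metric.mem_closedBall, dist_zero_right, not_le] at hx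
    apply Real.smoothTransition.zero_of_nonpos
    rw [hs]
    have h2 : (4:ℝ) < ‖x‖^2 * (((n:ℝ)^2)⁻¹) := by
      rw [← div_eq_mul_inv, lt_div_iff₀ (by positivity)]
      nlinarith [norm_nonneg x]
    simp only
    linarith
  · intro x hx
    apply Real.smoothTransition.one_of_one_le
    have h3 : ‖x‖^2 * (((n:ℝ)^2)⁻¹) ≤ 1 := by
      rw [← div_eq_mul_inv, div_le_one (by positivity)]
      nlinarith [norm_nonneg x]
    simp only [hs]
    linarith
  · exact fun x => Real.smoothTransition.nonneg _
  · exact fun x => Real.smoothTransition.le_one _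
  -- derivative bound
  · intro x
    have hnsq : HasFDerivAt (fun y : EuclideanSpace ℝ (Fin d) => ‖y‖^2)
        (2 • (innerSL ℝ x)) x := (hasStrictFDerivAt_norm_sq x).hasFDerivAt
    set Dx : EuclideanSpace ℝ (Fin d) →L[ℝ] ℝ := 2 • (innerSL ℝ x) with hDx
    have hDxnorm : ‖Dx‖ ≤ 2 * ‖x‖ := by
      rw [hDx]
      refine le_trans (norm_nsmul_le) ?_
      simp only [Nat.cast_ofNat, innerSL_apply_norm]
      exact le_rfl
    have hsd : HasFDerivAt s ((-(((n:ℝ)^2)⁻¹)) • Dx) x := by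
      have h1 := (hnsq.mul_const (((n:ℝ)^2)⁻¹)).const_sub 2
      rw [show (-(((n:ℝ)^2)⁻¹)) • Dx = -((((n:ℝ)^2)⁻¹) • Dx) by ext y; simp]
      exact h1
    have hchain : HasFDerivAt (fun y => ψ (s y))
        ((deriv ψ (s x)) • ((-(((n:ℝ)^2)⁻¹)) • Dx)) x :=
      (hψd (s x)).hasDerivAt.comp_hasFDerivAt x hsd
    rw [hchain.fderiv, norm_smul, norm_smul, norm_neg]
    have hnrm : ‖(((n:ℝ)^2)⁻¹)‖ = (((n:ℝ)^2)⁻¹) := by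
      rw [Real.norm_eq_abs, abs_of_nonneg (by positivity)]
    rw [hnrm]
    by_cases hcase : s x < -1
    · have h0 : deriv ψ (s x) = 0 := hderiv0 _ (by linarith)
      rw [h0]
      simp only [norm_zero, zero_mul]
      positivity
    · push_neg at hcase
      have hsx2 : s x ≤ 2 := by
        simp only [hs]
        have : 0 ≤ ‖x‖^2 * (((n:ℝ)^2)⁻¹) := by positivity
        linarith
      have hd1 : ‖deriv ψ (s x)‖ ≤ max K₀ 1 :=
        le_trans (hK₀ _ ⟨hcase, hsx2⟩) (le_max_left _ _)
      have hxb : ‖x‖ ≤ 2 * n := by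
        have h3 : ‖x‖^2 * (((n:ℝ)^2)⁻¹) ≤ 3 := by simp only [hs] at hcase; linarith
        rw [← div_eq_mul_inv, div_le_iff₀ (by positivity)] at h3
        nlinarith [norm_nonneg x]
      calc ‖deriv ψ (s x)‖ * ((((n:ℝ)^2)⁻¹) * ‖Dx‖)
          ≤ (max K₀ 1) * ((((n:ℝ)^2)⁻¹) * (2 * (2 * n))) := by
            apply mul_le_mul hd1 _ (by positivity) (zero_le_one.trans (le_max_right _ _))
            exact mul_le_mul_of_nonneg_left
              (hDxnorm.trans (by linarith)) (by positivity)
        _ = K / n := by rw [hK]; field_simp; ring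

/-- GNS inequality, d ≥ 3, p = 2, for compactly supported C¹ functions. -/
theorem my_csA (d : ℕ) (hd : 3 ≤ d) :
    ∃ C : ℝ≥0∞, C ≠ ⊤ ∧ ∀ w : EuclideanSpace ℝ (Fin d) → ℝ, ContDiff ℝ 1 w →
      HasCompactSupport w →
      eLpNorm w (ENNReal.ofReal (2*d/(d-2))) volume ≤
        C * eLpNorm (fun x => ‖fderiv ℝ w x‖) 2 volume := by
  have hd' : (3:ℝ) ≤ (d:ℝ) := by exact_mod_cast hd
  have hd2 : (0:ℝ) < (d:ℝ) - 2 := by linarith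
  have hS : (0:ℝ) < 2*d/(d-2) := by
    apply div_pos (by linarith) hd2
  refine ⟨((SNormLESNormFDerivOfEqConst (F := ℝ) (volume : Measure (EuclideanSpace ℝ (Fin d)))
    2 : ℝ≥0) : ℝ≥0∞), ENNReal.coe_ne_top, fun w hw h2w => ?_⟩
  set p' : ℝ≥0 := (2*d/(d-2) : ℝ).toNNReal with hp'
  have hcoe : ENNReal.ofReal (2*d/(d-2)) = (p' : ℝ≥0∞) := rfl
  have hfr : (Module.finrank ℝ (EuclideanSpace ℝ (Fin d)) : ℝ) = (d:ℝ) := by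
    rw [finrank_euclideanSpace_fin]
  have hp'inv : ((p':ℝ))⁻¹ = ((2:ℝ≥0):ℝ)⁻¹ -
      ((Module.finrank ℝ (EuclideanSpace ℝ (Fin d)) : ℝ))⁻¹ := by
    rw [hfr, hp', Real.coe_toNNReal _ hS.le]
    push_cast
    rw [inv_div]
    field_simp
  have key := eLpNorm_le_eLpNorm_fderiv_of_eq (volume : Measure (EuclideanSpace ℝ (Fin d)))
    (u := w) hw h2w (p := 2) (p' := p') one_le_two (by rw [finrank_euclideanSpace_fin]; omega) hp'inv
  rw [hcoe]
  calc eLpNorm w (p' : ℝ≥0∞) volume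
      ≤ (SNormLESNormFDerivOfEqConst ℝ volume 2 : ℝ≥0∞) *
        eLpNorm (fderiv ℝ w) ((2:ℝ≥0) : ℝ≥0∞) volume := key
    _ = (SNormLESNormFDerivOfEqConst ℝ volume 2 : ℝ≥0∞) *
        eLpNorm (fun x => ‖fderiv ℝ w x‖) 2 volume := by
        rw [eLpNorm_norm]
        norm_num

theorem my_csB (γ : ℝ) (hγ : 3 ≤ γ) :
    ∃ C : ℝ≥0∞, C ≠ ⊤ ∧ ∀ w : EuclideanSpace ℝ (Fin 2) → ℝ, ContDiff ℝ 1 w →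
      HasCompactSupport w →
      eLpNorm w (ENNReal.ofReal (2*γ)) volume ≤
        C * (eLpNorm w 2 volume + eLpNorm (fun x => ‖fderiv ℝ w x‖) 2 volume) := by
  have hγ1 : (1:ℝ) < γ := by linarith
  have hγ0 : (0:ℝ) < γ := by linarith
  have hγ1' : (0:ℝ) < γ - 1 := by linarith
  set θ : ℝ := ((γ-1)^2)⁻¹ with hθdef
  set a : ℝ := (γ-1)⁻¹ with hadef
  have hθpos : 0 < θ := by positivity
  have hθlt : θ < 1 := by
    rw [hθdef]
    rw [inv_lt_one_iff₀]
    right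
    nlinarith
  have hapos : 0 < a := by positivity
  have hab : θ * (γ - 1) = a := by
    rw [hθdef, hadef]
    field_simp
  set C₁ : ℝ≥0∞ := ((eLpNormLESNormFDerivOneConst
      (volume : Measure (EuclideanSpace ℝ (Fin 2))) ((2:ℝ≥0):ℝ)) : ℝ≥0∞) with hC₁
  set C₂ : ℝ≥0∞ := C₁ * ENNReal.ofReal γ with hC₂
  have hC₂top : C₂ ≠ ⊤ := by
    rw [hC₂]
    exact ENNReal.mul_ne_top ENNReal.coe_ne_top ENNReal.ofReal_ne_top
  refine ⟨C₂ ^ (1/(1+a)), ENNReal.rpow_ne_top_of_nonneg (by positivity) hC₂top, fun w hw h2w => ?_⟩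
  set A := eLpNorm w 2 volume with hA
  set B := eLpNorm (fun x => ‖fderiv ℝ w x‖) 2 volume with hB
  set X := eLpNorm w (ENNReal.ofReal (2*γ)) volume with hX
  have hwc : Continuous w := hw.continuous
  have hdwc : Continuous fun x => ‖fderiv ℝ w x‖ := (hw.continuous_fderiv (by norm_num)).norm
  have hXtop : X ≠ ⊤ := (hwc.memLp_of_hasCompactSupport h2w).eLpNorm_ne_top
  by_cases hX0 : X = 0
  · rw [hX0]; exact zero_le
  -- the compactly supported Sobolev inequality for g = ‖w‖^γ
  set g : EuclideanSpace ℝ (Fin 2) → ℝ := fun x => ‖w x‖ ^ γ with hgdef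
  have hg : ContDiff ℝ 1 g := hw.norm_rpow hγ1
  have h2g : HasCompactSupport g := h2w.norm.rpow_const (by linarith)
  have hconj : ((Module.finrank ℝ (EuclideanSpace ℝ (Fin 2)) : ℕ) : ℝ≥0).HolderConjugate 2 := by
    rw [finrank_euclideanSpace_fin]
    constructor
    · push_cast
      rw [← two_mul, mul_inv_cancel₀ two_ne_zero, inv_one]
    · norm_num
    · norm_num
  have step1 := eLpNorm_le_eLpNorm_fderiv_one
    (volume : Measure (EuclideanSpace ℝ (Fin 2))) hg h2g hconj
  -- LHS of step1 is X ^ γ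
  have lhs1 : eLpNorm g (((2:ℝ≥0)):ℝ≥0∞) volume = X ^ γ := by
    rw [hgdef]
    have := eLpNorm_norm_rpow (p := ((2:ℝ≥0):ℝ≥0∞)) (μ := volume) w hγ0
    rw [this, hX]
    congr 2
    rw [show (((2:ℝ≥0)):ℝ≥0∞) = ENNReal.ofReal 2 by norm_num,
      ← ENNReal.ofReal_mul (by norm_num)]
  -- pointwise bound for the derivative of g
  have hptw : ∀ x, ((‖fderiv ℝ g x‖₊ : ℝ≥0∞)) ≤
      ENNReal.ofReal γ * ((‖w x‖₊ : ℝ≥0∞) ^ (γ-1) * (‖fderiv ℝ w x‖₊ : ℝ≥0∞)) := by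
    intro x
    have h1lt : (1:ℝ≥0) < γ.toNNReal := by
      rwa [← Real.toNNReal_one, Real.toNNReal_lt_toNNReal_iff hγ0]
    have hb := nnnorm_fderiv_norm_rpow_le (hw.differentiable (by norm_num)) (x := x) h1lt
    rw [Real.coe_toNNReal _ hγ0.le] at hb
    have hb' : (‖fderiv ℝ g x‖₊ : ℝ≥0∞) ≤
        ((γ.toNNReal * ‖w x‖₊ ^ (γ - 1) * ‖fderiv ℝ w x‖₊ : ℝ≥0) : ℝ≥0∞) := by
      exact_mod_cast ENNReal.coe_le_coe.mpr hb
    refine hb'.trans ?_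
    rw [ENNReal.coe_mul, ENNReal.coe_mul, ENNReal.coe_rpow_of_nonneg _ (by linarith)]
    rw [mul_assoc]
    rfl
  -- eLpNorm of fderiv g in L¹
  set Y := eLpNorm w (ENNReal.ofReal (2*(γ-1))) volume with hY
  have hhold : ∫⁻ x, ((‖w x‖₊ : ℝ≥0∞) ^ (γ-1) * (‖fderiv ℝ w x‖₊ : ℝ≥0∞)) ∂volume ≤
      Y ^ (γ-1) * B := by
    have hconj2 : (2:ℝ).HolderConjugate 2 := by constructor <;> norm_num
    have hm1 : AEMeasurable (fun x => (‖w x‖₊ : ℝ≥0∞) ^ (γ-1)) volume := by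
      exact (hwc.measurable.enorm.pow_const _).aemeasurable
    have hm2 : AEMeasurable (fun x => (‖fderiv ℝ w x‖₊ : ℝ≥0∞)) volume :=
      (hw.continuous_fderiv (by norm_num)).measurable.enorm.aemeasurable
    have key := ENNReal.lintegral_mul_le_Lp_mul_Lq volume hconj2 hm1 hm2
    simp only [Pi.mul_apply] at key
    refine key.trans ?_
    have e1 : (∫⁻ x, ((‖w x‖₊ : ℝ≥0∞) ^ (γ-1)) ^ (2:ℝ) ∂volume) ^ (1/(2:ℝ)) = Y ^ (γ-1) := by
      have h2γ : (0:ℝ) < 2*(γ-1) := by linarith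
      have hpt : ∀ x : EuclideanSpace ℝ (Fin 2),
          ((‖w x‖₊ : ℝ≥0∞) ^ (γ-1)) ^ (2:ℝ) = (‖w x‖₊ : ℝ≥0∞) ^ (2*(γ-1)) := by
        intro x
        rw [← ENNReal.rpow_mul]
        congr 1
        ring
      rw [lintegral_congr hpt, hY,
        eLpNorm_eq_lintegral_rpow_enorm_toReal (ENNReal.ofReal_pos.mpr h2γ).ne' ENNReal.ofReal_ne_top,
        ENNReal.toReal_ofReal h2γ.le, ← ENNReal.rpow_mul,
        show (1/(2*(γ-1)))*(γ-1) = 1/2 by field_simp <;> ring]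
      rfl
    have e2 : (∫⁻ x, ((‖fderiv ℝ w x‖₊ : ℝ≥0∞)) ^ (2:ℝ) ∂volume) ^ (1/(2:ℝ)) = B := by
      rw [hB, eLpNorm_eq_lintegral_rpow_enorm_toReal (by norm_num) (by norm_num)]
      norm_num
      rfl
    rw [e1, e2]
  have step2 : eLpNorm (fderiv ℝ g) 1 volume ≤ ENNReal.ofReal γ * (Y ^ (γ-1) * B) := by
    rw [eLpNorm_one_eq_lintegral_enorm]
    calc ∫⁻ x, (‖fderiv ℝ g x‖₊ : ℝ≥0∞) ∂volume
        ≤ ∫⁻ x, ENNReal.ofReal γ *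
            ((‖w x‖₊ : ℝ≥0∞) ^ (γ-1) * (‖fderiv ℝ w x‖₊ : ℝ≥0∞)) ∂volume :=
          lintegral_mono hptw
      _ = ENNReal.ofReal γ * ∫⁻ x,
            ((‖w x‖₊ : ℝ≥0∞) ^ (γ-1) * (‖fderiv ℝ w x‖₊ : ℝ≥0∞)) ∂volume :=
          lintegral_const_mul' _ _ ENNReal.ofReal_ne_top
      _ ≤ ENNReal.ofReal γ * (Y ^ (γ-1) * B) := mul_le_mul_right hhold _
  -- interpolation for Y
  have hinterp : Y ≤ A ^ θ * X ^ (1-θ) := by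
    have hcond : 1/(2*(γ-1)) = θ/2 + (1-θ)/(2*γ) := by
      rw [hθdef]
      field_simp
      ring
    have := my_interp volume hwc.measurable.aemeasurable
      (p0 := 2) (p1 := 2*γ) (r := 2*(γ-1)) (θ := θ)
      (by norm_num) (by linarith) hθpos hθlt (by linarith) hcond
    rw [hY, hA, hX]
    simpa [show ENNReal.ofReal (2:ℝ) = 2 by norm_num] using this
  -- combine
  have main : X ^ γ ≤ C₂ * (A ^ a * X ^ ((1-θ)*(γ-1)) * B) := by
    calc X ^ γ = eLpNorm g (((2:ℝ≥0)):ℝ≥0∞) volume := lhs1.symm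
      _ ≤ C₁ * eLpNorm (fderiv ℝ g) 1 volume := step1
      _ ≤ C₁ * (ENNReal.ofReal γ * (Y ^ (γ-1) * B)) := mul_le_mul_right step2 _
      _ = C₂ * (Y ^ (γ-1) * B) := by rw [hC₂]; ring
      _ ≤ C₂ * ((A ^ θ * X ^ (1-θ)) ^ (γ-1) * B) :=
          mul_le_mul_right
            (mul_le_mul_left (ENNReal.rpow_le_rpow hinterp (by linarith)) B) C₂
      _ = C₂ * (A ^ a * X ^ ((1-θ)*(γ-1)) * B) := by
          rw [ENNReal.mul_rpow_of_nonneg _ _ (by linarith : (0:ℝ) ≤ γ-1),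
            ← ENNReal.rpow_mul, ← ENNReal.rpow_mul, hab]
  -- divide by X ^ b
  set b : ℝ := (1-θ)*(γ-1) with hbdef
  have hbpos : 0 ≤ b := by
    rw [hbdef]
    exact mul_nonneg (by linarith) (by linarith)
  have hsum : γ = (1+a) + b := by
    rw [hbdef, hadef, hθdef]
    field_simp
    ring
  have hXb0 : X ^ b ≠ 0 := by
    simp only [ne_eq, ENNReal.rpow_eq_zero_iff, not_or]
    constructor
    · rintro ⟨h1, -⟩; exact hX0 h1
    · rintro ⟨h1, -⟩; exact hXtop h1
  have hXbtop : X ^ b ≠ ⊤ := ENNReal.rpow_ne_top_of_nonneg hbpos hXtop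
  have main2 : X ^ (1+a) ≤ C₂ * A ^ a * B := by
    rw [← ENNReal.mul_le_mul_iff_left hXb0 hXbtop]
    calc X ^ (1+a) * X ^ b = X ^ γ := by
          rw [← ENNReal.rpow_add_of_nonneg _ _ (by positivity) hbpos, ← hsum]
      _ ≤ C₂ * (A ^ a * X ^ b * B) := main
      _ = C₂ * A ^ a * B * X ^ b := by ring
  -- conclude
  set M := A + B with hM
  have hfin : X ^ (1+a) ≤ C₂ * M ^ (1+a) := by
    calc X ^ (1+a) ≤ C₂ * A ^ a * B := main2
      _ ≤ C₂ * M ^ a * M :=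
          mul_le_mul' (mul_le_mul' le_rfl (ENNReal.rpow_le_rpow le_self_add hapos.le))
            le_add_self
      _ = C₂ * M ^ (1+a) := by
          rw [mul_assoc, ENNReal.rpow_add_of_nonneg _ _ (by norm_num) hapos.le,
            ENNReal.rpow_one]
          ring
  have h1a : (0:ℝ) < 1 + a := by linarith
  calc X = (X ^ (1+a)) ^ (1/(1+a)) := by
        rw [← ENNReal.rpow_mul]
        rw [mul_one_div, div_self h1a.ne', ENNReal.rpow_one]
    _ ≤ (C₂ * M ^ (1+a)) ^ (1/(1+a)) := ENNReal.rpow_le_rpow hfin (by positivity)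
    _ = C₂ ^ (1/(1+a)) * M := by
        rw [ENNReal.mul_rpow_of_nonneg _ _ (by positivity), ← ENNReal.rpow_mul]
        rw [mul_one_div, div_self h1a.ne', ENNReal.rpow_one]

/-- Sobolev-type inequality for H¹ functions on ℝ^d, d ≥ 2. -/
theorem my_sobolev (d : ℕ) (hd : 2 ≤ d) (R : ℝ) (hR : 2 < R)
    (hRd : 3 ≤ d → R ≤ 2*(d:ℝ)/((d:ℝ)-2)) :
    ∃ C : ℝ≥0∞, C ≠ ⊤ ∧ ∀ v : EuclideanSpace ℝ (Fin d) → ℝ, ContDiff ℝ 1 v →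
      MemLp v 2 volume → MemLp (fun x => ‖fderiv ℝ v x‖) 2 volume →
      eLpNorm v (ENNReal.ofReal R) volume ≤
        C * (eLpNorm v 2 volume + eLpNorm (fun x => ‖fderiv ℝ v x‖) 2 volume) := by
  classical
  set S : ℝ := if d = 2 then max R 6 else 2*(d:ℝ)/((d:ℝ)-2) with hSdef
  have hS2 : 2 < S := by
    rw [hSdef]
    split_ifs with h
    · have : (6:ℝ) ≤ max R 6 := le_max_right _ _
      linarith
    · have hd3 : 3 ≤ d := by omega
      have hd3' : (3:ℝ) ≤ (d:ℝ) := by exact_mod_cast hd3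
      rw [lt_div_iff₀ (by linarith)]
      linarith
  have hRS : R ≤ S := by
    rw [hSdef]
    split_ifs with h
    · exact le_max_left _ _
    · exact hRd (by omega)
  have hSpos : (0:ℝ) < S := by linarith
  -- Step 1 : compactly supported inequality at exponent S
  have step1 : ∃ C₀ : ℝ≥0∞, C₀ ≠ ⊤ ∧ ∀ w : EuclideanSpace ℝ (Fin d) → ℝ,
      ContDiff ℝ 1 w → HasCompactSupport w →
      eLpNorm w (ENNReal.ofReal S) volume ≤
        C₀ * (eLpNorm w 2 volume + eLpNorm (fun x => ‖fderiv ℝ w x‖) 2 volume) := by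
    by_cases hd2 : d = 2
    · subst hd2
      obtain ⟨C, hCtop, hCB⟩ := my_csB (S/2) (by
        have : (6:ℝ) ≤ S := by rw [hSdef]; simp
        linarith)
      refine ⟨C, hCtop, fun w hw h2w => ?_⟩
      have := hCB w hw h2w
      rwa [show 2*(S/2) = S by ring] at this
    · have hd3 : 3 ≤ d := by omega
      obtain ⟨C, hCtop, hCA⟩ := my_csA d hd3
      refine ⟨C, hCtop, fun w hw h2w => ?_⟩
      have hSeq : S = 2*(d:ℝ)/((d:ℝ)-2) := by rw [hSdef]; simp [hd2]
      rw [hSeq]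
      exact (hCA w hw h2w).trans (mul_le_mul_right le_add_self _)
  obtain ⟨C₀, hC₀top, hCS⟩ := step1
  obtain ⟨K, hKpos, hcut⟩ := my_cutoff d
  set k : ℝ≥0∞ := ENNReal.ofReal K with hk
  set C₁ : ℝ≥0∞ := C₀ * (1 + k) with hC₁
  have hC₁top : C₁ ≠ ⊤ := by
    rw [hC₁]
    exact ENNReal.mul_ne_top hC₀top (by
      exact ENNReal.add_ne_top.2 ⟨ENNReal.one_ne_top, ENNReal.ofReal_ne_top⟩)
  -- Step 2 : H¹ inequality at exponent S
  have step2 : ∀ v : EuclideanSpace ℝ (Fin d) → ℝ, ContDiff ℝ 1 v →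
      MemLp v 2 volume → MemLp (fun x => ‖fderiv ℝ v x‖) 2 volume →
      eLpNorm v (ENNReal.ofReal S) volume ≤
        C₁ * (eLpNorm v 2 volume + eLpNorm (fun x => ‖fderiv ℝ v x‖) 2 volume) := by
    intro v hv hv2 hvB
    set A := eLpNorm v 2 volume with hA
    set B := eLpNorm (fun x => ‖fderiv ℝ v x‖) 2 volume with hB
    choose χ hχ1 hχ2 hχ3 hχ4 hχ5 hχ6 using fun n : ℕ => hcut (n+1) (Nat.succ_pos n)
    set w : ℕ → EuclideanSpace ℝ (Fin d) → ℝ := fun n x => χ n x * v x with hw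
    have hwcd : ∀ n, ContDiff ℝ 1 (w n) := fun n => (hχ1 n).mul hv
    have hwcs : ∀ n, HasCompactSupport (w n) := fun n => (hχ2 n).mul_right
    have hwc : ∀ n, Continuous (w n) := fun n => (hwcd n).continuous
    -- L² bounds
    have hw2 : ∀ n, eLpNorm (w n) 2 volume ≤ A := by
      intro n
      apply eLpNorm_mono
      intro x
      rw [hw]
      simp only [Real.norm_eq_abs, abs_mul]
      calc |χ n x| * |v x| ≤ 1 * |v x| := by
            apply mul_le_mul_of_nonneg_right _ (abs_nonneg _)
            rw [abs_of_nonneg (hχ4 n x)]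
            exact hχ5 n x
        _ = |v x| := one_mul _
    have hwB : ∀ n, eLpNorm (fun x => ‖fderiv ℝ (w n) x‖) 2 volume ≤ B + k * A := by
      intro n
      have hn1 : (1:ℝ) ≤ ((n:ℝ)+1) := by
        have := Nat.cast_nonneg (α := ℝ) n
        linarith
      have hptw : ∀ x, ‖fderiv ℝ (w n) x‖ ≤ ‖fderiv ℝ v x‖ + K * |v x| := by
        intro x
        rw [hw]
        beta_reduce
        rw [fderiv_fun_mul ((hχ1 n).differentiable (by norm_num)).differentiableAt
          (hv.differentiable (by norm_num)).differentiableAt]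
        calc ‖χ n x • fderiv ℝ v x + v x • fderiv ℝ (χ n) x‖
            ≤ ‖χ n x • fderiv ℝ v x‖ + ‖v x • fderiv ℝ (χ n) x‖ := norm_add_le _ _
          _ ≤ ‖fderiv ℝ v x‖ + K * |v x| := by
              apply add_le_add
              · rw [norm_smul, Real.norm_eq_abs, abs_of_nonneg (hχ4 n x)]
                calc χ n x * ‖fderiv ℝ v x‖ ≤ 1 * ‖fderiv ℝ v x‖ :=
                      mul_le_mul_of_nonneg_right (hχ5 n x) (norm_nonneg _)
                  _ = ‖fderiv ℝ v x‖ := one_mul _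
              · rw [norm_smul, Real.norm_eq_abs, mul_comm]
                apply mul_le_mul_of_nonneg_right _ (abs_nonneg _)
                refine (hχ6 n x).trans ?_
                have : ((n+1:ℕ):ℝ) = (n:ℝ)+1 := by push_cast; ring
                rw [this]
                exact div_le_self hKpos.le hn1
      calc eLpNorm (fun x => ‖fderiv ℝ (w n) x‖) 2 volume
          ≤ eLpNorm (fun x => ‖fderiv ℝ v x‖ + K * |v x|) 2 volume := by
            apply eLpNorm_mono
            intro x
            rw [norm_norm, Real.norm_eq_abs]
            exact (hptw x).trans (le_abs_self _)
        _ ≤ eLpNorm (fun x => ‖fderiv ℝ v x‖) 2 volume +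
            eLpNorm (fun x => K * |v x|) 2 volume := by
            apply eLpNorm_add_le
            · exact ((hv.continuous_fderiv (by norm_num)).norm).aestronglyMeasurable
            · exact (continuous_const.mul hv.continuous.abs).aestronglyMeasurable
            · norm_num
        _ = B + k * A := by
            congr 1
            rw [show (fun x : EuclideanSpace ℝ (Fin d) => K * |v x|) =
              K • (fun x => |v x|) from rfl, eLpNorm_const_smul]
            congr 1
            · rw [hk, ← ofReal_norm, Real.norm_eq_abs, abs_of_pos hKpos]
            · rw [hA]
              rw [show (fun x : EuclideanSpace ℝ (Fin d) => |v x|) =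
                (fun x => ‖v x‖) from funext fun x => (Real.norm_eq_abs (v x)).symm]
              exact eLpNorm_norm v
    -- per-n bound at exponent S
    have hwS : ∀ n, eLpNorm (w n) (ENNReal.ofReal S) volume ≤ C₁ * (A + B) := by
      intro n
      calc eLpNorm (w n) (ENNReal.ofReal S) volume
          ≤ C₀ * (eLpNorm (w n) 2 volume +
              eLpNorm (fun x => ‖fderiv ℝ (w n) x‖) 2 volume) :=
            hCS (w n) (hwcd n) (hwcs n)
        _ ≤ C₀ * (A + (B + k * A)) := by
            exact mul_le_mul_right (add_le_add (hw2 n) (hwB n)) _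
        _ ≤ C₀ * ((1+k) * (A+B)) := by
            apply mul_le_mul_right
            have hexp : (1+k)*(A+B) = (A + (B + k*A)) + k*B := by ring
            rw [hexp]
            exact le_self_add
        _ = C₁ * (A+B) := by rw [hC₁]; ring
    -- Fatou
    have hSne : S ≠ 0 := hSpos.ne'
    have ptlim : ∀ x, Filter.Tendsto (fun n => ((‖w n x‖₊ : ℝ≥0∞)) ^ S) atTop
        (nhds (((‖v x‖₊ : ℝ≥0∞)) ^ S)) := by
      intro x
      apply Filter.Tendsto.congr' _ tendsto_const_nhds
      rw [Filter.EventuallyEq, eventually_atTop]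
      refine ⟨⌈‖x‖⌉₊, fun n hn => ?_⟩
      have hxn : ‖x‖ ≤ ((n+1:ℕ):ℝ) := by
        calc ‖x‖ ≤ (⌈‖x‖⌉₊ : ℝ) := Nat.le_ceil _
          _ ≤ ((n+1:ℕ):ℝ) := by exact_mod_cast Nat.le_succ_of_le hn
      have : w n x = v x := by
        rw [hw]
        simp only
        rw [hχ3 n x hxn, one_mul]
      rw [this]
    have hmeas : ∀ n, Measurable fun x => ((‖w n x‖₊ : ℝ≥0∞)) ^ S :=
      fun n => (hwc n).measurable.enorm.pow_const _
    have hfatou : ∫⁻ x, ((‖v x‖₊ : ℝ≥0∞)) ^ S ∂volume ≤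
        Filter.liminf (fun n => ∫⁻ x, ((‖w n x‖₊ : ℝ≥0∞)) ^ S ∂volume) atTop := by
      rw [lintegral_congr (fun x => ((ptlim x).liminf_eq).symm)]
      exact lintegral_liminf_le hmeas
    have hlim2 : Filter.liminf (fun n => ∫⁻ x, ((‖w n x‖₊ : ℝ≥0∞)) ^ S ∂volume) atTop ≤
        (C₁ * (A+B)) ^ S := by
      have hbnd : ∀ n, ∫⁻ x, ((‖w n x‖₊ : ℝ≥0∞)) ^ S ∂volume ≤ (C₁ * (A+B)) ^ S := by
        intro n
        have he : ∫⁻ x, ((‖w n x‖₊ : ℝ≥0∞)) ^ S ∂volume =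
            (eLpNorm (w n) (ENNReal.ofReal S) volume) ^ S := by
          rw [eLpNorm_eq_lintegral_rpow_enorm_toReal (by simp [hSpos]) (by simp),
            ENNReal.toReal_ofReal hSpos.le, ← ENNReal.rpow_mul, one_div,
            inv_mul_cancel₀ hSne, ENNReal.rpow_one]
          rfl
        rw [he]
        exact ENNReal.rpow_le_rpow (hwS n) hSpos.le
      calc Filter.liminf (fun n => ∫⁻ x, ((‖w n x‖₊ : ℝ≥0∞)) ^ S ∂volume) atTop
          ≤ Filter.liminf (fun _ : ℕ => (C₁ * (A+B)) ^ S) atTop :=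
            liminf_le_liminf (Filter.Eventually.of_forall hbnd)
        _ = (C₁ * (A+B)) ^ S := liminf_const _
    calc eLpNorm v (ENNReal.ofReal S) volume
        = (∫⁻ x, ((‖v x‖₊ : ℝ≥0∞)) ^ S ∂volume) ^ (1/S) := by
          rw [eLpNorm_eq_lintegral_rpow_enorm_toReal (by simp [hSpos]) (by simp),
            ENNReal.toReal_ofReal hSpos.le]
          rfl
      _ ≤ ((C₁ * (A+B)) ^ S) ^ (1/S) :=
          ENNReal.rpow_le_rpow (hfatou.trans hlim2) (by positivity)
      _ = C₁ * (A+B) := by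
          rw [← ENNReal.rpow_mul, mul_one_div, div_self hSne, ENNReal.rpow_one]
  -- Step 3 : interpolate down to exponent R
  by_cases hReq : R = S
  · refine ⟨C₁, hC₁top, fun v hv hv2 hvB => ?_⟩
    rw [hReq]
    exact step2 v hv hv2 hvB
  · have hRSlt : R < S := lt_of_le_of_ne hRS hReq
    set θ : ℝ := (1/R - 1/S)/(1/2 - 1/S) with hθdef
    have hhalfS : (0:ℝ) < 1/2 - 1/S := by
      have : 1/S < 1/2 := by
        rw [div_lt_div_iff₀ hSpos (by norm_num)]
        linarith
      linarith
    have hRSpos : (0:ℝ) < 1/R - 1/S := by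
      have : 1/S < 1/R := by
        rw [div_lt_div_iff₀ hSpos (by linarith)]
        linarith
      linarith
    have hθpos : 0 < θ := div_pos hRSpos hhalfS
    have hθlt : θ < 1 := by
      rw [hθdef, div_lt_one hhalfS]
      have : 1/R < 1/2 := by
        rw [div_lt_div_iff₀ (by linarith) (by norm_num)]
        linarith
      linarith
    have hcond : 1/R = θ/2 + (1-θ)/S := by
      have h1 : θ * (1/2 - 1/S) = 1/R - 1/S := div_mul_cancel₀ _ hhalfS.ne'
      calc 1/R = (1/R - 1/S) + 1/S := by ring
        _ = θ * (1/2 - 1/S) + 1/S := by rw [h1]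
        _ = θ/2 + (1-θ)/S := by ring
    refine ⟨C₁ ^ (1-θ), ENNReal.rpow_ne_top_of_nonneg (by linarith) hC₁top,
      fun v hv hv2 hvB => ?_⟩
    set A := eLpNorm v 2 volume with hA
    set B := eLpNorm (fun x => ‖fderiv ℝ v x‖) 2 volume with hB
    have hMtop : A + B ≠ ⊤ :=
      ENNReal.add_ne_top.2 ⟨hv2.eLpNorm_ne_top, hvB.eLpNorm_ne_top⟩
    have hzle : ∀ z : ℝ≥0∞, z ≠ ⊤ → z ^ θ * z ^ (1-θ) ≤ z := by
      intro z hz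
      by_cases hz0 : z = 0
      · rw [hz0, ENNReal.zero_rpow_of_pos hθpos, zero_mul]
      · rw [← ENNReal.rpow_add _ _ hz0 hz]
        norm_num
    have hint := my_interp (f := v) volume hv.continuous.measurable.aemeasurable
      (p0 := 2) (p1 := S) (θ := θ) (by norm_num) hSpos hθpos hθlt (by linarith) hcond
    rw [show ENNReal.ofReal (2:ℝ) = 2 by norm_num] at hint
    calc eLpNorm v (ENNReal.ofReal R) volume
        ≤ A ^ θ * (eLpNorm v (ENNReal.ofReal S) volume) ^ (1-θ) := hint
      _ ≤ (A+B) ^ θ * (C₁ * (A+B)) ^ (1-θ) := by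
          apply mul_le_mul'
          · exact ENNReal.rpow_le_rpow le_self_add hθpos.le
          · exact ENNReal.rpow_le_rpow (step2 v hv hv2 hvB) (by linarith)
      _ = C₁ ^ (1-θ) * ((A+B) ^ θ * (A+B) ^ (1-θ)) := by
          rw [ENNReal.mul_rpow_of_nonneg _ _ (by linarith : (0:ℝ) ≤ 1-θ)]
          ring
      _ ≤ C₁ ^ (1-θ) * (A+B) := mul_le_mul_right (hzle _ hMtop) _

/-- For `d ≥ 2`, `ε > 0` and `q = max{2+ε, d}`, there is
`C = C(d, ε)` such that for every `c ∈ L^q(ℝ^d)`, all `C¹` functions `u, v` with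
`u, v, |∇u|, |∇v| ∈ L²`, and every `h`,
`|∫ c v (u − u_h)| ≤ C |h| ‖c‖_{L^q} (‖v‖_{L²} + ‖|∇v|‖_{L²}) (‖u‖_{L²} + ‖|∇u|‖_{L²})`. -/
theorem potential_form_lipschitz_estimate
    (d : ℕ) (hd : 2 ≤ d) (ε : ℝ) (hε : 0 < ε)
    (q : ℝ≥0∞) (hq : q = ENNReal.ofReal (max (2 + ε) (d : ℝ))) :
    ∃ C : ℝ, 0 < C ∧
      ∀ (c : EuclideanSpace ℝ (Fin d) → ℝ),
        MemLp c q volume →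
        ∀ u v : EuclideanSpace ℝ (Fin d) → ℝ,
          ContDiff ℝ 1 u → ContDiff ℝ 1 v →
          MemLp u 2 volume → MemLp v 2 volume →
          MemLp (fun x => ‖fderiv ℝ u x‖) 2 volume →
          MemLp (fun x => ‖fderiv ℝ v x‖) 2 volume →
          ∀ h : EuclideanSpace ℝ (Fin d),
            |∫ x, c x * v x * (u x - u (x + h))| ≤
              C * ‖h‖ * (eLpNorm c q volume).toReal *
                ((eLpNorm v 2 volume).toReal +
                  (eLpNorm (fun x => ‖fderiv ℝ v x‖) 2 volume).toReal) *
                ((eLpNorm u 2 volume).toReal +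
                  (eLpNorm (fun x => ‖fderiv ℝ u x‖) 2 volume).toReal) := by
  set Q : ℝ := max (2 + ε) (d : ℝ) with hQdef
  have hQ2 : 2 < Q := lt_of_lt_of_le (by linarith) (le_max_left _ _)
  have hQd : (d:ℝ) ≤ Q := le_max_right _ _
  have hQpos : 0 < Q := by linarith
  set R : ℝ := 2*Q/(Q-2) with hRdef
  have hRpos : 0 < R := by
    apply div_pos (by linarith) (by linarith)
  have hR2 : 2 < R := by
    rw [hRdef, lt_div_iff₀ (by linarith)]
    linarith
  have hRd : 3 ≤ d → R ≤ 2*(d:ℝ)/((d:ℝ)-2) := by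
    intro hd3
    have hd3' : (3:ℝ) ≤ (d:ℝ) := by exact_mod_cast hd3
    rw [hRdef, div_le_div_iff₀ (by linarith) (by linarith)]
    nlinarith
  obtain ⟨Cs, hCstop, hsob⟩ := my_sobolev d hd R hR2 hRd
  refine ⟨Cs.toReal + 1, by positivity, fun c hc u v hu hv hu2 hv2 huB hvB h => ?_⟩
  set r : ℝ≥0∞ := ENNReal.ofReal R with hrdef
  set w : EuclideanSpace ℝ (Fin d) → ℝ := fun x => u x - u (x + h) with hwdef
  have hwcont : Continuous w := by
    apply Continuous.sub hu.continuous
    exact hu.continuous.comp (continuous_id.add continuous_const)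
  -- conjugate exponent identities
  have hhalf : 1/(2:ℝ≥0∞) = 1/q + 1/r := by
    rw [hq, hrdef, one_div, one_div, one_div, ← ENNReal.ofReal_inv_of_pos hQpos,
      ← ENNReal.ofReal_inv_of_pos hRpos, ← ENNReal.ofReal_add (by positivity) (by positivity)]
    rw [show Q⁻¹ + R⁻¹ = (2:ℝ)⁻¹ by
      rw [hRdef, inv_div]
      field_simp
      ring]
    rw [show ((2:ℝ≥0∞))⁻¹ = ENNReal.ofReal ((2:ℝ)⁻¹) by
      rw [ENNReal.ofReal_inv_of_pos (by norm_num)]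
      norm_num]
  have hone : 1/(1:ℝ≥0∞) = 1/2 + 1/2 := by
    rw [ENNReal.div_add_div_same, one_div_one,
      show (1+1 : ℝ≥0∞) = 2 by norm_num]
    exact (ENNReal.div_self (by norm_num) (by norm_num)).symm
  -- measurability
  have hcm : AEStronglyMeasurable c volume := hc.aestronglyMeasurable
  have hvm : AEStronglyMeasurable v volume := hv.continuous.aestronglyMeasurable
  have hwm : AEStronglyMeasurable w volume := hwcont.aestronglyMeasurable
  have hcvm : AEStronglyMeasurable (fun x => c x * v x) volume := hcm.mul hvm
  -- Hölder
  have holdA : eLpNorm (fun x => (c x * v x) * w x) 1 volume ≤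
      eLpNorm (fun x => c x * v x) 2 volume * eLpNorm w 2 volume := by
    refine (eLpNorm_le_eLpNorm_mul_eLpNorm_of_nnnorm (p := 2) (q := 2) (r := 1) hcvm hwm
      (fun a b => a * b) 1 (Eventually.of_forall fun x => ?_)).trans (le_of_eq (by rw [ENNReal.coe_one, one_mul]))
    rw [nnnorm_mul, one_mul]
  have holdB : eLpNorm (fun x => c x * v x) 2 volume ≤
      eLpNorm c q volume * eLpNorm v r volume := by
    refine (eLpNorm_le_eLpNorm_mul_eLpNorm_of_nnnorm (p := q) (q := r) (r := 2) hcm hvm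
      (fun a b => a * b) 1 (Eventually.of_forall fun x => ?_)
      (hpqr := ⟨by simpa only [one_div] using hhalf.symm⟩)).trans (le_of_eq (by rw [ENNReal.coe_one, one_mul]))
    rw [nnnorm_mul, one_mul]
  have htrans := my_translation u hu h
  have hsobv := hsob v hv hv2 hvB
  -- notation
  set Nc := eLpNorm c q volume with hNc
  set Av := eLpNorm v 2 volume with hAv
  set Bv := eLpNorm (fun x => ‖fderiv ℝ v x‖) 2 volume with hBv
  set Au := eLpNorm u 2 volume with hAu
  set Bu := eLpNorm (fun x => ‖fderiv ℝ u x‖) 2 volume with hBu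
  set RHSe : ℝ≥0∞ := Cs * ENNReal.ofReal ‖h‖ * Nc * (Av + Bv) * (Au + Bu) with hRHSe
  have chain : eLpNorm (fun x => (c x * v x) * w x) 1 volume ≤ RHSe := by
    calc eLpNorm (fun x => (c x * v x) * w x) 1 volume
        ≤ eLpNorm (fun x => c x * v x) 2 volume * eLpNorm w 2 volume := holdA
      _ ≤ (Nc * eLpNorm v r volume) * (ENNReal.ofReal ‖h‖ * Bu) :=
          mul_le_mul' holdB htrans
      _ ≤ (Nc * (Cs * (Av + Bv))) * (ENNReal.ofReal ‖h‖ * (Au + Bu)) :=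
          mul_le_mul' (mul_le_mul_right hsobv _)
            (mul_le_mul_right le_add_self _)
      _ = RHSe := by rw [hRHSe]; ring
  have hRHStop : RHSe ≠ ⊤ := by
    rw [hRHSe]
    apply ENNReal.mul_ne_top
    apply ENNReal.mul_ne_top
    apply ENNReal.mul_ne_top
    · exact ENNReal.mul_ne_top hCstop ENNReal.ofReal_ne_top
    · exact hc.eLpNorm_ne_top
    · exact ENNReal.add_ne_top.2 ⟨hv2.eLpNorm_ne_top, hvB.eLpNorm_ne_top⟩
    · exact ENNReal.add_ne_top.2 ⟨hu2.eLpNorm_ne_top, huB.eLpNorm_ne_top⟩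
  -- from the integral to the L¹ norm
  have habs : |∫ x, c x * v x * (u x - u (x + h))| ≤
      (eLpNorm (fun x => (c x * v x) * w x) 1 volume).toReal := by
    rw [← Real.norm_eq_abs]
    refine le_trans (norm_integral_le_lintegral_norm _) ?_
    apply le_of_eq
    congr 1
    rw [eLpNorm_one_eq_lintegral_enorm]
    apply lintegral_congr
    intro x
    rw [ofReal_norm]
  refine habs.trans ?_
  have hfin : (eLpNorm (fun x => (c x * v x) * w x) 1 volume).toReal ≤ RHSe.toReal :=
    ENNReal.toReal_mono hRHStop chain
  refine hfin.trans ?_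
  have hRHSeval : RHSe.toReal = Cs.toReal * ‖h‖ * Nc.toReal *
      (Av.toReal + Bv.toReal) * (Au.toReal + Bu.toReal) := by
    rw [hRHSe, ENNReal.toReal_mul, ENNReal.toReal_mul, ENNReal.toReal_mul,
      ENNReal.toReal_mul, ENNReal.toReal_ofReal (norm_nonneg _),
      ENNReal.toReal_add hv2.eLpNorm_ne_top hvB.eLpNorm_ne_top,
      ENNReal.toReal_add hu2.eLpNorm_ne_top huB.eLpNorm_ne_top]
  rw [hRHSeval]
  have hCsle : Cs.toReal ≤ Cs.toReal + 1 := by linarith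
  have hfacts : (0:ℝ) ≤ ‖h‖ * Nc.toReal * (Av.toReal + Bv.toReal) * (Au.toReal + Bu.toReal) := by
    positivity
  calc Cs.toReal * ‖h‖ * Nc.toReal * (Av.toReal + Bv.toReal) * (Au.toReal + Bu.toReal)
      = Cs.toReal * (‖h‖ * Nc.toReal * (Av.toReal + Bv.toReal) * (Au.toReal + Bu.toReal)) := by
        ring
    _ ≤ (Cs.toReal + 1) * (‖h‖ * Nc.toReal * (Av.toReal + Bv.toReal) * (Au.toReal + Bu.toReal)) :=
        mul_le_mul_of_nonneg_right hCsle hfacts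
    _ = (Cs.toReal + 1) * ‖h‖ * Nc.toReal * (Av.toReal + Bv.toReal) * (Au.toReal + Bu.toReal) := by
        ring
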